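/- arXiv:2409.04911 — 2 statements merged into one kernel-verified Lean document; each statement's English description precedes it below -/
import Mathlib

section
/- Let N be a d×d real symmetric positive definite matrix and E ∈ ℝ^d. Then Eᵀ N⁻¹ E = sup over pairs (Z, M) with Z ∈ ℝ^d, M a symmetric d×d matrix satisfying M ⪰ Z⊗Z, of the quantity 2 E·Z − tr(N M). -/
open Matrix

lemma trace_mul_psd_nonneg {d : ℕ} {N P : Matrix (Fin d) (Fin d) ℝ}
    (hN : N.PosSemidef) (hP : P.PosSemidef) : 0 ≤ (N * P).trace := by
  obtain ⟨B, rfl⟩ : ∃ B : Matrix (Fin d) (Fin d) ℝ, P = Bᴴ * B := by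
    open scoped MatrixOrder in
    obtain ⟨B, hB⟩ := CStarAlgebra.nonneg_iff_eq_star_mul_self.mp hP.nonneg
    exact ⟨B, hB⟩
  have h1 : (N * (Bᴴ * B)).trace = (B * N * Bᴴ).trace := by
    rw [← mul_assoc]; exact Matrix.trace_mul_cycle N Bᴴ B
  rw [h1, Matrix.trace]
  apply Finset.sum_nonneg
  intro i _
  have h := hN.dotProduct_mulVec_nonneg (fun j => B i j)
  simp only [star_trivial, dotProduct, Matrix.mulVec, Finset.mul_sum] at h
  simp only [Matrix.diag, Matrix.mul_apply, Matrix.conjTranspose_apply, star_trivial,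
    Finset.sum_mul, Finset.mul_sum]
  refine le_trans h (le_of_eq ?_)
  rw [Finset.sum_comm]
  exact Finset.sum_congr rfl fun x _ => Finset.sum_congr rfl fun y _ => by ring

lemma trace_vecMulVec {d : ℕ} (N : Matrix (Fin d) (Fin d) ℝ) (Z : Fin d → ℝ) :
    (N * Matrix.vecMulVec Z Z).trace = Z ⬝ᵥ N *ᵥ Z := by
  simp only [Matrix.trace, Matrix.diag, Matrix.mul_apply, Matrix.vecMulVec_apply,
    dotProduct, Matrix.mulVec, Finset.mul_sum]
  apply Finset.sum_congr rfl
  intro i _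
  apply Finset.sum_congr rfl
  intro j _
  ring

theorem stmt_3 (d : ℕ) (N : Matrix (Fin d) (Fin d) ℝ) (hN : N.IsSymm) (hNpos : N.PosDef)
    (E : Fin d → ℝ) :
    IsLUB {r : ℝ | ∃ (Z : Fin d → ℝ) (M : Matrix (Fin d) (Fin d) ℝ),
        M.IsSymm ∧ (M - Matrix.vecMulVec Z Z).PosSemidef ∧
        r = 2 * (E ⬝ᵥ Z) - (N * M).trace}
      (E ⬝ᵥ N⁻¹ *ᵥ E) := by
  set Z₀ : Fin d → ℝ := N⁻¹ *ᵥ E with hZ₀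
  have hdet : IsUnit N.det := isUnit_iff_ne_zero.mpr (ne_of_gt hNpos.det_pos)
  have hNinv : N * N⁻¹ = 1 := Matrix.mul_nonsing_inv N hdet
  have hNZ₀ : N *ᵥ Z₀ = E := by
    rw [hZ₀, Matrix.mulVec_mulVec, hNinv, Matrix.one_mulVec]
  -- key quadratic inequality: for all Z, 2 E·Z − Z⬝NZ ≤ E⬝Z₀
  have key : ∀ Z : Fin d → ℝ, 2 * (E ⬝ᵥ Z) - Z ⬝ᵥ N *ᵥ Z ≤ E ⬝ᵥ Z₀ := by
    intro Z
    have h0 : 0 ≤ (Z - Z₀) ⬝ᵥ N *ᵥ (Z - Z₀) := hNpos.posSemidef.dotProduct_mulVec_nonneg (Z - Z₀)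
    have hZNZ₀ : Z ⬝ᵥ N *ᵥ Z₀ = E ⬝ᵥ Z := by
      rw [hNZ₀, dotProduct_comm]
    have hZ₀NZ : Z₀ ⬝ᵥ N *ᵥ Z = E ⬝ᵥ Z := by
      rw [Matrix.dotProduct_mulVec, ← Matrix.mulVec_transpose, hN.eq, hNZ₀]
    have hZ₀NZ₀ : Z₀ ⬝ᵥ N *ᵥ Z₀ = E ⬝ᵥ Z₀ := by
      rw [hNZ₀, dotProduct_comm]
    rw [Matrix.mulVec_sub, dotProduct_sub, sub_dotProduct,
      sub_dotProduct, hZNZ₀, hZ₀NZ, hZ₀NZ₀] at h0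
    linarith
  constructor
  · rintro r ⟨Z, M, hMsymm, hMpsd, rfl⟩
    have h1 : 0 ≤ (N * (M - Matrix.vecMulVec Z Z)).trace :=
      trace_mul_psd_nonneg hNpos.posSemidef hMpsd
    rw [Matrix.mul_sub, Matrix.trace_sub, _root_.trace_vecMulVec] at h1
    have := key Z
    linarith
  · intro b hb
    have hmem : E ⬝ᵥ Z₀ ∈ {r : ℝ | ∃ (Z : Fin d → ℝ) (M : Matrix (Fin d) (Fin d) ℝ),
        M.IsSymm ∧ (M - Matrix.vecMulVec Z Z).PosSemidef ∧
        r = 2 * (E ⬝ᵥ Z) - (N * M).trace} := by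
      refine ⟨Z₀, Matrix.vecMulVec Z₀ Z₀, ?_, ?_, ?_⟩
      · ext i j; simp [Matrix.vecMulVec_apply, Matrix.transpose_apply, mul_comm]
      · simpa using Matrix.PosSemidef.zero
      · rw [_root_.trace_vecMulVec, hNZ₀]
        rw [dotProduct_comm Z₀ E]
        ring
    exact hb hmem
end

section
/- For a real symmetric positive definite d×d matrix N, the function E ↦ Eᵀ N⁻¹ E is convex on ℝ^d, and the map (E, N) ↦ Eᵀ N⁻¹ E is jointly convex on ℝ^d × {symmetric positive definite matrices}. -/
open Matrix

private lemma symm_dot {d : ℕ} {N : Matrix (Fin d) (Fin d) ℝ} (hs : N.IsSymm)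
    (u v : Fin d → ℝ) : u ⬝ᵥ N *ᵥ v = (N *ᵥ u) ⬝ᵥ v := by
  rw [Matrix.dotProduct_mulVec, ← Matrix.mulVec_transpose, hs.eq]

private lemma psd_nonneg {d : ℕ} {N : Matrix (Fin d) (Fin d) ℝ} (hp : N.PosDef)
    (v : Fin d → ℝ) : 0 ≤ v ⬝ᵥ N *ᵥ v := by
  have := hp.posSemidef.dotProduct_mulVec_nonneg v
  simpa using this

private lemma key {d : ℕ} {N : Matrix (Fin d) (Fin d) ℝ} (hs : N.IsSymm) (hp : N.PosDef)
    (E z : Fin d → ℝ) : 2 * (z ⬝ᵥ E) - z ⬝ᵥ N *ᵥ z ≤ E ⬝ᵥ N⁻¹ *ᵥ E := by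
  have hdet : IsUnit N.det := hp.det_pos.ne'.isUnit
  have hNi : N⁻¹ * N = 1 := nonsing_inv_mul N hdet
  have hiN : N * N⁻¹ = 1 := mul_nonsing_inv N hdet
  have h0 : 0 ≤ (E - N *ᵥ z) ⬝ᵥ N⁻¹ *ᵥ (E - N *ᵥ z) := psd_nonneg hp.inv _
  have h1 : N⁻¹ *ᵥ (N *ᵥ z) = z := by rw [mulVec_mulVec, hNi, one_mulVec]
  have h2 : (N *ᵥ z) ⬝ᵥ N⁻¹ *ᵥ E = z ⬝ᵥ E := by
    rw [← symm_dot hs, mulVec_mulVec, hiN, one_mulVec]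
  have h3 : (N *ᵥ z) ⬝ᵥ z = z ⬝ᵥ N *ᵥ z := (symm_dot hs z z).symm
  have h4 : E ⬝ᵥ z = z ⬝ᵥ E := dotProduct_comm E z
  rw [mulVec_sub, sub_dotProduct, dotProduct_sub, dotProduct_sub, h1, h2, h3, h4] at h0
  linarith

private lemma posdef_smul {d : ℕ} {N : Matrix (Fin d) (Fin d) ℝ} {a : ℝ} (ha : 0 < a)
    (hN : N.PosDef) : (a • N).PosDef := by
  refine Matrix.PosDef.of_dotProduct_mulVec_pos ?_ (fun x hx => ?_)
  · have ht : Nᵀ = N := hN.1.eq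
    simp [Matrix.IsSymm.eq, Matrix.IsHermitian, conjTranspose_smul, ht]
  · have h := hN.dotProduct_mulVec_pos hx
    have : (star x) ⬝ᵥ (a • N) *ᵥ x = a * ((star x) ⬝ᵥ N *ᵥ x) := by
      rw [smul_mulVec, dotProduct_smul, smul_eq_mul]
    rw [this]
    exact mul_pos ha h

private lemma posdef_combo {d : ℕ} {N M : Matrix (Fin d) (Fin d) ℝ} {a b : ℝ}
    (ha : 0 ≤ a) (hb : 0 ≤ b) (hab : a + b = 1) (hN : N.PosDef) (hM : M.PosDef) :
    (a • N + b • M).PosDef := by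
  rcases ha.lt_or_eq with ha' | ha'
  · rcases hb.lt_or_eq with hb' | hb'
    · exact (posdef_smul ha' hN).add (posdef_smul hb' hM)
    · have : a = 1 := by linarith
      simp [this, ← hb']
      exact hN
  · have : b = 1 := by linarith
    simp [this, ← ha']
    exact hM

private lemma symm_combo {d : ℕ} {N M : Matrix (Fin d) (Fin d) ℝ} (a b : ℝ)
    (hN : N.IsSymm) (hM : M.IsSymm) : (a • N + b • M).IsSymm := by
  simp [Matrix.IsSymm, transpose_add, transpose_smul, hN.eq, hM.eq]

/-- For posdef `S`, `v ⬝ᵥ S⁻¹ *ᵥ v = 2⟨z,v⟩ - ⟨z,Sz⟩` with `z = S⁻¹ v`. -/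
private lemma value_eq {d : ℕ} {S : Matrix (Fin d) (Fin d) ℝ} (hS : S.PosDef)
    (v : Fin d → ℝ) :
    v ⬝ᵥ S⁻¹ *ᵥ v = 2 * ((S⁻¹ *ᵥ v) ⬝ᵥ v) - (S⁻¹ *ᵥ v) ⬝ᵥ S *ᵥ (S⁻¹ *ᵥ v) := by
  have hdet : IsUnit S.det := hS.det_pos.ne'.isUnit
  have hSz : S *ᵥ (S⁻¹ *ᵥ v) = v := by
    rw [mulVec_mulVec, mul_nonsing_inv S hdet, one_mulVec]
  rw [hSz, dotProduct_comm]
  ring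

theorem stmt_7 (d : ℕ) :
    (∀ N : Matrix (Fin d) (Fin d) ℝ, N.IsSymm → N.PosDef →
      ConvexOn ℝ Set.univ (fun E : Fin d → ℝ => E ⬝ᵥ N⁻¹ *ᵥ E)) ∧
    ConvexOn ℝ
      {p : (Fin d → ℝ) × Matrix (Fin d) (Fin d) ℝ | p.2.IsSymm ∧ p.2.PosDef}
      (fun p : (Fin d → ℝ) × Matrix (Fin d) (Fin d) ℝ => p.1 ⬝ᵥ p.2⁻¹ *ᵥ p.1) := by
  constructor
  · intro N hs hp
    refine ⟨convex_univ, ?_⟩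
    intro E _ F _ a b ha hb hab
    set v : Fin d → ℝ := a • E + b • F with hv
    set z : Fin d → ℝ := N⁻¹ *ᵥ v with hz
    have hval : v ⬝ᵥ N⁻¹ *ᵥ v = 2 * (z ⬝ᵥ v) - z ⬝ᵥ N *ᵥ z := value_eq hp v
    have hzv : z ⬝ᵥ v = a * (z ⬝ᵥ E) + b * (z ⬝ᵥ F) := by
      rw [hv]; simp [dotProduct_add, dotProduct_smul, smul_eq_mul]
    have hEkey := key hs hp E z
    have hFkey := key hs hp F z
    have hsplit : v ⬝ᵥ N⁻¹ *ᵥ v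
        = a * (2 * (z ⬝ᵥ E) - z ⬝ᵥ N *ᵥ z) + b * (2 * (z ⬝ᵥ F) - z ⬝ᵥ N *ᵥ z) := by
      rw [hval, hzv]; linear_combination (z ⬝ᵥ N *ᵥ z) * hab
    simp only [smul_eq_mul]
    calc v ⬝ᵥ N⁻¹ *ᵥ v
        = a * (2 * (z ⬝ᵥ E) - z ⬝ᵥ N *ᵥ z) + b * (2 * (z ⬝ᵥ F) - z ⬝ᵥ N *ᵥ z) := hsplit
      _ ≤ a * (E ⬝ᵥ N⁻¹ *ᵥ E) + b * (F ⬝ᵥ N⁻¹ *ᵥ F) :=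
          add_le_add (mul_le_mul_of_nonneg_left hEkey ha)
            (mul_le_mul_of_nonneg_left hFkey hb)
  · refine ⟨?_, ?_⟩
    · intro p hp q hq a b ha hb hab
      obtain ⟨hps, hpd⟩ := hp
      obtain ⟨hqs, hqd⟩ := hq
      refine ⟨?_, ?_⟩
      · show ((a • p + b • q).2).IsSymm
        simp only [Prod.snd_add, Prod.smul_snd]
        exact symm_combo a b hps hqs
      · show ((a • p + b • q).2).PosDef
        simp only [Prod.snd_add, Prod.smul_snd]
        exact posdef_combo ha hb hab hpd hqd
    · rintro ⟨E, N⟩ ⟨hNs, hNd⟩ ⟨F, M⟩ ⟨hMs, hMd⟩ a b ha hb hab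
      simp only [Prod.smul_mk, Prod.mk_add_mk, smul_eq_mul]
      set S : Matrix (Fin d) (Fin d) ℝ := a • N + b • M with hSdef
      have hSd : S.PosDef := posdef_combo ha hb hab hNd hMd
      set v : Fin d → ℝ := a • E + b • F with hv
      set z : Fin d → ℝ := S⁻¹ *ᵥ v with hz
      have hval : v ⬝ᵥ S⁻¹ *ᵥ v = 2 * (z ⬝ᵥ v) - z ⬝ᵥ S *ᵥ z := value_eq hSd v
      have hzv : z ⬝ᵥ v = a * (z ⬝ᵥ E) + b * (z ⬝ᵥ F) := by
        rw [hv]; simp [dotProduct_add, dotProduct_smul, smul_eq_mul]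
      have hzS : z ⬝ᵥ S *ᵥ z = a * (z ⬝ᵥ N *ᵥ z) + b * (z ⬝ᵥ M *ᵥ z) := by
        rw [hSdef]
        simp [add_mulVec, smul_mulVec, dotProduct_add, dotProduct_smul, smul_eq_mul]
      have hEkey := key hNs hNd E z
      have hFkey := key hMs hMd F z
      calc v ⬝ᵥ S⁻¹ *ᵥ v
          = a * (2 * (z ⬝ᵥ E) - z ⬝ᵥ N *ᵥ z) + b * (2 * (z ⬝ᵥ F) - z ⬝ᵥ M *ᵥ z) := by
            rw [hval, hzv, hzS]; ring
        _ ≤ a * (E ⬝ᵥ N⁻¹ *ᵥ E) + b * (F ⬝ᵥ M⁻¹ *ᵥ F) :=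
            add_le_add (mul_le_mul_of_nonneg_left hEkey ha)
              (mul_le_mul_of_nonneg_left hFkey hb)
end
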